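/- For n large, the proportion p_n = |R_n^{(H)}|/n! of ordered ranked trees of size n whose subtree H(t) is maximally probable satisfies 4/n^2 ≤ p_n ≤ 2(n^2 − 4n + 46)/(n(n−2)(n−4)), given that |R_n^{(H)}| = c_n + 3·2^{n−2} with c_n = Σ_{i=4}^{n} (i−1)!·α_{i−1}·2^{n−i}, c'_n = (n−1)!·α_{n−1}, c''_n = 2(n−1)!, c_n ≥ c'_n, and |R_n^{(H)}| − c'_n ≤ c''_n. -/

import Mathlib

noncomputable def alpha (n : ℕ) : ℝ :=
  ∑ q ∈ Finset.Icc 1 (n - 1), (2 : ℝ) ^ (min q (n - q)) / (Nat.choose n q : ℝ)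

/-- `p n = |R_n^{(H)}| / n!` where
`|R_n^{(H)}| = ∑_{i=4}^n (i-1)!·α_{i-1}·2^{n-i} + 3·2^{n-2}`. -/
noncomputable def p (n : ℕ) : ℝ :=
  (∑ i ∈ Finset.Icc 4 n, ((i - 1).factorial : ℝ) * alpha (i - 1) * 2 ^ (n - i) +
      3 * 2 ^ (n - 2)) / (n.factorial : ℝ)

/-! ### Auxiliary bounding function -/

noncomputable def Hb (k : ℕ) : ℝ :=
  if k ≤ 8 then 2 ^ k * (k.factorial : ℝ) / 92 ^ k else 4 * k / 2 ^ k

lemma Hb_nonneg (k : ℕ) : 0 ≤ Hb k := by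
  unfold Hb; split <;> positivity

lemma two_mul_le_two_pow : ∀ k : ℕ, 1 ≤ k → 2 * k ≤ 2 ^ k := by
  intro k hk
  induction k, hk using Nat.le_induction with
  | base => norm_num
  | succ k hk ih =>
    have h2 : 2 ≤ 2 ^ k := le_trans (by omega) ih
    calc 2 * (k + 1) = 2 * k + 2 := by ring
      _ ≤ 2 ^ k + 2 ^ k := Nat.add_le_add ih h2
      _ = 2 ^ (k + 1) := by ring

lemma four_pow_le_choose {m k : ℕ} (hk : 1 ≤ k) (hkm : 2 * k ≤ m) :
    4 ^ k ≤ 2 * k * m.choose k := by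
  calc 4 ^ k ≤ 2 * k * Nat.centralBinom k :=
        Nat.four_pow_le_two_mul_self_mul_centralBinom k hk
    _ ≤ 2 * k * m.choose k := Nat.mul_le_mul_left _ (Nat.choose_le_choose k hkm)

lemma term_le_Hb {m k : ℕ} (hm : 100 ≤ m) (hk : 1 ≤ k) (hkm : 2 * k ≤ m) :
    (2 : ℝ) ^ k / (m.choose k : ℝ) ≤ Hb k := by
  have hc : 0 < m.choose k := Nat.choose_pos (by omega)
  have hcR : (0 : ℝ) < (m.choose k : ℝ) := by exact_mod_cast hc
  unfold Hb
  split
  · rename_i h8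
    have h1 : (92 : ℕ) ^ k ≤ k.factorial * m.choose k := by
      calc (92 : ℕ) ^ k ≤ (m + 1 - k) ^ k := Nat.pow_le_pow_left (by omega) k
        _ ≤ m.descFactorial k := Nat.pow_sub_le_descFactorial m k
        _ = k.factorial * m.choose k := Nat.descFactorial_eq_factorial_mul_choose m k
    have h1' : (92 : ℝ) ^ k ≤ (k.factorial : ℝ) * (m.choose k : ℝ) := by exact_mod_cast h1
    rw [div_le_div_iff₀ hcR (by positivity)]
    calc (2 : ℝ) ^ k * 92 ^ k ≤ 2 ^ k * ((k.factorial : ℝ) * (m.choose k : ℝ)) := by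
          apply mul_le_mul_of_nonneg_left h1' (by positivity)
      _ = 2 ^ k * (k.factorial : ℝ) * (m.choose k : ℝ) := by ring
  · rename_i h8
    have h1 : (4 : ℕ) ^ k ≤ 2 * k * m.choose k := four_pow_le_choose hk hkm
    have h1' : (4 : ℝ) ^ k ≤ 2 * (k : ℝ) * (m.choose k : ℝ) := by exact_mod_cast h1
    have hk0 : (0 : ℝ) ≤ (k : ℝ) := Nat.cast_nonneg k
    rw [div_le_div_iff₀ hcR (by positivity)]
    calc (2 : ℝ) ^ k * 2 ^ k = 4 ^ k := by rw [← mul_pow]; norm_num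
      _ ≤ 2 * (k : ℝ) * (m.choose k : ℝ) := h1'
      _ ≤ 4 * (k : ℝ) * (m.choose k : ℝ) := by nlinarith

lemma min_facts {m q : ℕ} (h1 : 1 ≤ q) (h2 : q ≤ m - 1) (hm : 2 ≤ m) :
    1 ≤ min q (m - q) ∧ 2 * min q (m - q) ≤ m := by
  have ha := min_le_left q (m - q)
  have hb := min_le_right q (m - q)
  rcases le_total q (m - q) with h | h
  · rw [min_eq_left h]; omega
  · rw [min_eq_right h]; omega

lemma choose_min {m q : ℕ} (h2 : q ≤ m) :
    m.choose q = m.choose (min q (m - q)) := by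
  rcases le_total q (m - q) with h | h
  · rw [min_eq_left h]
  · rw [min_eq_right h, Nat.choose_symm h2]

lemma term_le_one {m q : ℕ} (hq : q ∈ Finset.Icc 1 (m - 1)) :
    (2 : ℝ) ^ (min q (m - q)) / (m.choose q : ℝ) ≤ 1 := by
  simp only [Finset.mem_Icc] at hq
  have hm : 2 ≤ m := by omega
  obtain ⟨hk1, hk2⟩ := min_facts hq.1 hq.2 hm
  set k := min q (m - q) with hk
  rw [choose_min (by omega : q ≤ m), ← hk]
  have h1 : 4 ^ k ≤ 2 * k * m.choose k := four_pow_le_choose hk1 hk2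
  have h2 : 2 * k ≤ 2 ^ k := two_mul_le_two_pow k hk1
  have h3 : 2 ^ k * 2 ^ k ≤ 2 ^ k * m.choose k := by
    calc 2 ^ k * 2 ^ k = 4 ^ k := by rw [← Nat.mul_pow]
      _ ≤ 2 * k * m.choose k := h1
      _ ≤ 2 ^ k * m.choose k := Nat.mul_le_mul_right _ h2
  have h4 : 2 ^ k ≤ m.choose k := Nat.le_of_mul_le_mul_left h3 (by positivity)
  have h4' : (2 : ℝ) ^ k ≤ (m.choose k : ℝ) := by exact_mod_cast h4
  have hc : (0 : ℝ) < (m.choose k : ℝ) := by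
    exact_mod_cast Nat.choose_pos (by omega : k ≤ m)
  rw [div_le_one hc]; exact h4'

lemma alpha_nonneg (m : ℕ) : 0 ≤ alpha m := by
  unfold alpha
  apply Finset.sum_nonneg
  intro q _
  positivity

lemma alpha_le_card (m : ℕ) : alpha m ≤ m := by
  unfold alpha
  calc (∑ q ∈ Finset.Icc 1 (m - 1), (2 : ℝ) ^ (min q (m - q)) / (Nat.choose m q : ℝ))
      ≤ ∑ q ∈ Finset.Icc 1 (m - 1), (1 : ℝ) :=
        Finset.sum_le_sum fun q hq => term_le_one hq
    _ = ((m - 1 + 1 - 1 : ℕ) : ℝ) := by rw [Finset.sum_const, Nat.card_Icc]; simp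
    _ ≤ m := by
        have : (m - 1 + 1 - 1 : ℕ) ≤ m := by omega
        exact_mod_cast this

lemma term_min_le {m q : ℕ} (hm : 100 ≤ m) (hq : q ∈ Finset.Icc 1 (m - 1)) :
    (2 : ℝ) ^ (min q (m - q)) / (m.choose q : ℝ) ≤ Hb q + Hb (m - q) := by
  simp only [Finset.mem_Icc] at hq
  obtain ⟨hk1, hk2⟩ := min_facts hq.1 hq.2 (by omega)
  rw [choose_min (by omega : q ≤ m)]
  rcases le_total q (m - q) with h | h
  · rw [min_eq_left h]
    have := term_le_Hb (m := m) (k := q) hm (by omega) (by omega)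
    linarith [Hb_nonneg (m - q)]
  · rw [min_eq_right h]
    have := term_le_Hb (m := m) (k := m - q) hm (by omega) (by omega)
    linarith [Hb_nonneg q]

lemma sum_reflect (m : ℕ) (f : ℕ → ℝ) :
    (∑ q ∈ Finset.Icc 1 (m - 1), f (m - q)) = ∑ q ∈ Finset.Icc 1 (m - 1), f q := by
  apply Finset.sum_nbij' (i := fun q => m - q) (j := fun q => m - q) <;>
    simp only [Finset.mem_Icc] <;> intros <;> first | omega | rfl | trivial

lemma sum_Hb_tail : ∀ j : ℕ, 8 ≤ j →
    (∑ k ∈ Finset.Icc 9 j, 4 * (k : ℝ) / 2 ^ k) ≤ 40 / 256 - (4 * j + 8) / 2 ^ j := by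
  intro j hj
  induction j, hj using Nat.le_induction with
  | base => norm_num
  | succ j hj ih =>
    rw [Finset.sum_Icc_succ_top (by omega)]
    have h2 : (0 : ℝ) < 2 ^ j := by positivity
    have key : 4 * ((j : ℝ) + 1) / 2 ^ (j + 1)
        = (4 * j + 8) / 2 ^ j - (4 * ((j : ℝ) + 1) + 8) / 2 ^ (j + 1) := by
      rw [pow_succ]
      field_simp
      ring
    push_cast
    push_cast at ih
    rw [key]
    linarith

lemma sum_Hb_head : (∑ k ∈ Finset.Icc 1 8, Hb k) ≤ 3 / 32 := by
  rw [show (Finset.Icc 1 8 : Finset ℕ) = {1, 2, 3, 4, 5, 6, 7, 8} by decide]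
  rw [Finset.sum_insert (by decide), Finset.sum_insert (by decide),
    Finset.sum_insert (by decide), Finset.sum_insert (by decide),
    Finset.sum_insert (by decide), Finset.sum_insert (by decide),
    Finset.sum_insert (by decide), Finset.sum_singleton]
  norm_num [Hb, Nat.factorial]

lemma sum_Hb_le {m : ℕ} (hm : 100 ≤ m) : (∑ q ∈ Finset.Icc 1 (m - 1), Hb q) ≤ 1 / 4 := by
  have hsplit : Finset.Icc 1 (m - 1) = Finset.Icc 1 8 ∪ Finset.Icc 9 (m - 1) := by
    ext x; simp only [Finset.mem_Icc, Finset.mem_union]; omega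
  have hdisj : Disjoint (Finset.Icc 1 8) (Finset.Icc 9 (m - 1)) := by
    simp only [Finset.disjoint_left, Finset.mem_Icc]; intro a ha hb; omega
  rw [hsplit, Finset.sum_union hdisj]
  have htail : (∑ k ∈ Finset.Icc 9 (m - 1), Hb k)
      = ∑ k ∈ Finset.Icc 9 (m - 1), 4 * (k : ℝ) / 2 ^ k := by
    apply Finset.sum_congr rfl
    intro k hk
    simp only [Finset.mem_Icc] at hk
    unfold Hb
    rw [if_neg (by omega)]
  have h1 := sum_Hb_head
  have h2 := sum_Hb_tail (m - 1) (by omega)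
  have h3 : (0 : ℝ) ≤ (4 * ((m : ℝ) - 1) + 8) / 2 ^ (m - 1) := by
    have hm' : (100 : ℝ) ≤ (m : ℝ) := by exact_mod_cast hm
    apply div_nonneg (by linarith) (by positivity)
  have hcast : ((m - 1 : ℕ) : ℝ) = (m : ℝ) - 1 := by
    have : 1 ≤ m := by omega
    push_cast [this]
    ring
  rw [htail]
  rw [hcast] at h2
  linarith

lemma alpha_le_half {m : ℕ} (hm : 100 ≤ m) : alpha m ≤ 1 / 2 := by
  unfold alpha
  calc (∑ q ∈ Finset.Icc 1 (m - 1), (2 : ℝ) ^ (min q (m - q)) / (Nat.choose m q : ℝ))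
      ≤ ∑ q ∈ Finset.Icc 1 (m - 1), (Hb q + Hb (m - q)) :=
        Finset.sum_le_sum fun q hq => term_min_le hm hq
    _ = (∑ q ∈ Finset.Icc 1 (m - 1), Hb q) + ∑ q ∈ Finset.Icc 1 (m - 1), Hb (m - q) :=
        Finset.sum_add_distrib
    _ = (∑ q ∈ Finset.Icc 1 (m - 1), Hb q) + ∑ q ∈ Finset.Icc 1 (m - 1), Hb q := by
        rw [sum_reflect]
    _ ≤ 1 / 4 + 1 / 4 := by have := sum_Hb_le hm; linarith
    _ = 1 / 2 := by norm_num

lemma alpha_ge {m : ℕ} (hm : 3 ≤ m) : 4 / (m : ℝ) ≤ alpha m := by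
  unfold alpha
  have hmR : (0 : ℝ) < (m : ℝ) := by exact_mod_cast (by omega : 0 < m)
  have hsub : ({1, m - 1} : Finset ℕ) ⊆ Finset.Icc 1 (m - 1) := by
    intro x hx
    simp only [Finset.mem_insert, Finset.mem_singleton] at hx
    simp only [Finset.mem_Icc]
    omega
  have hne : (1 : ℕ) ≠ m - 1 := by omega
  have hterm : ∀ q ∈ Finset.Icc 1 (m - 1),
      (0 : ℝ) ≤ (2 : ℝ) ^ (min q (m - q)) / (Nat.choose m q : ℝ) := by
    intro q _; positivity
  have hkey : (∑ q ∈ ({1, m - 1} : Finset ℕ), (2 : ℝ) ^ (min q (m - q)) / (Nat.choose m q : ℝ))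
      ≤ ∑ q ∈ Finset.Icc 1 (m - 1), (2 : ℝ) ^ (min q (m - q)) / (Nat.choose m q : ℝ) := by
    apply Finset.sum_le_sum_of_subset_of_nonneg hsub
    intro q hq _; exact hterm q hq
  have hval : (∑ q ∈ ({1, m - 1} : Finset ℕ), (2 : ℝ) ^ (min q (m - q)) / (Nat.choose m q : ℝ))
      = 4 / (m : ℝ) := by
    rw [Finset.sum_insert (by simpa using hne), Finset.sum_singleton]
    have e1 : min 1 (m - 1) = 1 := by omega
    have e2 : m - (m - 1) = 1 := by omega
    have e3 : min (m - 1) 1 = 1 := by omega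
    have e4 : m.choose 1 = m := Nat.choose_one_right m
    have e5 : m.choose (m - 1) = m := by
      rw [show m.choose (m - 1) = m.choose (m - 1) from rfl]
      have := Nat.choose_symm (show 1 ≤ m by omega)
      rw [this, Nat.choose_one_right]
    rw [e1, e2, e3, e4, e5]
    field_simp
    ring
  rw [← hval]
  exact hkey

lemma sum_fact_pow_le : ∀ n : ℕ, 4 ≤ n →
    (∑ i ∈ Finset.Icc 4 n, ((i - 1).factorial : ℝ) * 2 ^ (n - i))
      ≤ 2 * ((n - 1).factorial : ℝ) := by
  intro n hn
  induction n, hn using Nat.le_induction with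
  | base => norm_num [Nat.factorial]
  | succ n hn ih =>
    rw [Finset.sum_Icc_succ_top (by omega)]
    have hre : (∑ i ∈ Finset.Icc 4 n, ((i - 1).factorial : ℝ) * 2 ^ (n + 1 - i))
        = 2 * ∑ i ∈ Finset.Icc 4 n, ((i - 1).factorial : ℝ) * 2 ^ (n - i) := by
      rw [Finset.mul_sum]
      apply Finset.sum_congr rfl
      intro i hi
      simp only [Finset.mem_Icc] at hi
      have : n + 1 - i = (n - i) + 1 := by omega
      rw [this, pow_succ]
      ring
    rw [hre]
    have htop : ((n + 1 - 1).factorial : ℝ) * 2 ^ (n + 1 - (n + 1)) = (n.factorial : ℝ) := by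
      simp
    rw [htop]
    have hfe : (n.factorial : ℝ) = n * ((n - 1).factorial : ℝ) := by
      exact_mod_cast (Nat.mul_factorial_pred (by omega : n ≠ 0)).symm
    have hn4 : (4 : ℝ) ≤ (n : ℝ) := by exact_mod_cast hn
    have hfpos : (0 : ℝ) ≤ ((n - 1).factorial : ℝ) := by positivity
    have : ((n + 1 - 1).factorial : ℝ) = (n.factorial : ℝ) := by simp
    rw [this]
    nlinarith

lemma pow_mul_fact_le : ∀ n : ℕ, 130 ≤ n →
    2 ^ n * (9803 * Nat.factorial 100) ≤ Nat.factorial (n - 1) := by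
  intro n hn
  induction n, hn using Nat.le_induction with
  | base => norm_num [Nat.factorial]
  | succ n hn ih =>
    have h1 : 2 ^ (n + 1) * (9803 * Nat.factorial 100)
        = 2 * (2 ^ n * (9803 * Nat.factorial 100)) := by ring
    have h2 : (n + 1 - 1) = n := by omega
    rw [h1, h2]
    calc 2 * (2 ^ n * (9803 * Nat.factorial 100)) ≤ 2 * Nat.factorial (n - 1) :=
          Nat.mul_le_mul_left 2 ih
      _ ≤ n * Nat.factorial (n - 1) := Nat.mul_le_mul_right _ (by omega)
      _ = Nat.factorial n := Nat.mul_factorial_pred (by omega)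

theorem p_bounds :
    ∃ N : ℕ, ∀ n : ℕ, N ≤ n →
      4 / (n : ℝ) ^ 2 ≤ p n ∧
        p n ≤ 2 * ((n : ℝ) ^ 2 - 4 * n + 46) / ((n : ℝ) * ((n : ℝ) - 2) * ((n : ℝ) - 4)) := by
  use 130
  intro n hn
  have hnR : (130 : ℝ) ≤ (n : ℝ) := by exact_mod_cast hn
  have hnpos : (0 : ℝ) < (n : ℝ) := by linarith
  have hfac : (0 : ℝ) < (n.factorial : ℝ) := by
    exact_mod_cast Nat.factorial_pos n
  have hfac1 : (0 : ℝ) < ((n - 1).factorial : ℝ) := by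
    exact_mod_cast Nat.factorial_pos (n - 1)
  have hfe : (n.factorial : ℝ) = (n : ℝ) * ((n - 1).factorial : ℝ) := by
    exact_mod_cast (Nat.mul_factorial_pred (by omega : n ≠ 0)).symm
  have hcast1 : ((n - 1 : ℕ) : ℝ) = (n : ℝ) - 1 := by
    have h1 : 1 ≤ n := by omega
    push_cast [h1]; ring
  constructor
  · -- lower bound
    have hsingle : ((n - 1).factorial : ℝ) * alpha (n - 1) * 2 ^ (n - n)
        ≤ ∑ i ∈ Finset.Icc 4 n, ((i - 1).factorial : ℝ) * alpha (i - 1) * 2 ^ (n - i) := by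
      apply Finset.single_le_sum (f := fun i => ((i - 1).factorial : ℝ) * alpha (i - 1) * 2 ^ (n - i))
      · intro i _
        have := alpha_nonneg (i - 1)
        positivity
      · simp only [Finset.mem_Icc]; omega
    have hsimp : ((n - 1).factorial : ℝ) * alpha (n - 1) * 2 ^ (n - n)
        = ((n - 1).factorial : ℝ) * alpha (n - 1) := by
      simp
    have halpha : 4 / ((n : ℝ) - 1) ≤ alpha (n - 1) := by
      have := alpha_ge (m := n - 1) (by omega)
      rwa [hcast1] at this
    have hpw : (0 : ℝ) ≤ 3 * 2 ^ (n - 2) := by positivity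
    have halpha' : 4 ≤ alpha (n - 1) * ((n : ℝ) - 1) := by
      rw [div_le_iff₀ (by linarith : (0 : ℝ) < (n : ℝ) - 1)] at halpha
      linarith
    have h4n : 4 * (n : ℝ) ≤ alpha (n - 1) * (n : ℝ) ^ 2 := by
      nlinarith [alpha_nonneg (n - 1), hnpos]
    have hkey : ((n - 1).factorial : ℝ) * alpha (n - 1)
        ≤ ∑ i ∈ Finset.Icc 4 n, ((i - 1).factorial : ℝ) * alpha (i - 1) * 2 ^ (n - i) := by
      rw [← hsimp]; exact hsingle
    unfold p
    rw [div_le_div_iff₀ (by positivity : (0 : ℝ) < (n : ℝ) ^ 2) hfac]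
    calc 4 * (n.factorial : ℝ) = ((n - 1).factorial : ℝ) * (4 * (n : ℝ)) := by
          rw [hfe]; ring
      _ ≤ ((n - 1).factorial : ℝ) * (alpha (n - 1) * (n : ℝ) ^ 2) := by
          apply mul_le_mul_of_nonneg_left h4n hfac1.le
      _ = ((n - 1).factorial : ℝ) * alpha (n - 1) * (n : ℝ) ^ 2 := by ring
      _ ≤ (∑ i ∈ Finset.Icc 4 n, ((i - 1).factorial : ℝ) * alpha (i - 1) * 2 ^ (n - i)
            + 3 * 2 ^ (n - 2)) * (n : ℝ) ^ 2 := by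
          apply mul_le_mul_of_nonneg_right (by linarith) (by positivity)
  · -- upper bound
    have hnum : (∑ i ∈ Finset.Icc 4 n, ((i - 1).factorial : ℝ) * alpha (i - 1) * 2 ^ (n - i)
        + 3 * 2 ^ (n - 2)) ≤ 2 * ((n - 1).factorial : ℝ) := by
      have hsplit : Finset.Icc 4 n = Finset.Icc 4 101 ∪ Finset.Icc 102 n := by
        ext x; simp only [Finset.mem_Icc, Finset.mem_union]; omega
      have hdisj : Disjoint (Finset.Icc 4 101) (Finset.Icc 102 n) := by
        simp only [Finset.disjoint_left, Finset.mem_Icc]; intro a ha hb; omega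
      rw [hsplit, Finset.sum_union hdisj]
      -- head
      have hhead : (∑ i ∈ Finset.Icc 4 101, ((i - 1).factorial : ℝ) * alpha (i - 1) * 2 ^ (n - i))
          ≤ 9800 * (Nat.factorial 100 : ℝ) * 2 ^ n := by
        calc (∑ i ∈ Finset.Icc 4 101, ((i - 1).factorial : ℝ) * alpha (i - 1) * 2 ^ (n - i))
            ≤ ∑ i ∈ Finset.Icc 4 101, (Nat.factorial 100 : ℝ) * 100 * 2 ^ n := by
              apply Finset.sum_le_sum
              intro i hi
              simp only [Finset.mem_Icc] at hi
              have hf : ((i - 1).factorial : ℝ) ≤ (Nat.factorial 100 : ℝ) := by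
                exact_mod_cast Nat.factorial_le (by omega : i - 1 ≤ 100)
              have ha1 : alpha (i - 1) ≤ ((i - 1 : ℕ) : ℝ) := alpha_le_card (i - 1)
              have ha2 : ((i - 1 : ℕ) : ℝ) ≤ 100 := by exact_mod_cast (by omega : i - 1 ≤ 100)
              have ha : alpha (i - 1) ≤ 100 := le_trans ha1 ha2
              have hp : (2 : ℝ) ^ (n - i) ≤ 2 ^ n := by
                apply pow_le_pow_right₀ (by norm_num) (by omega)
              have h0a : (0 : ℝ) ≤ alpha (i - 1) := alpha_nonneg (i - 1)
              have h0f : (0 : ℝ) ≤ ((i - 1).factorial : ℝ) := by positivity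
              apply mul_le_mul (mul_le_mul hf ha h0a (by positivity)) hp (by positivity)
                (by positivity)
          _ = 98 * ((Nat.factorial 100 : ℝ) * 100 * 2 ^ n) := by
              rw [Finset.sum_const, Nat.card_Icc]
              norm_num
          _ = 9800 * (Nat.factorial 100 : ℝ) * 2 ^ n := by ring
      -- tail
      have htail : (∑ i ∈ Finset.Icc 102 n, ((i - 1).factorial : ℝ) * alpha (i - 1) * 2 ^ (n - i))
          ≤ ((n - 1).factorial : ℝ) := by
        calc (∑ i ∈ Finset.Icc 102 n, ((i - 1).factorial : ℝ) * alpha (i - 1) * 2 ^ (n - i))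
            ≤ ∑ i ∈ Finset.Icc 102 n, (1 / 2 : ℝ) * (((i - 1).factorial : ℝ) * 2 ^ (n - i)) := by
              apply Finset.sum_le_sum
              intro i hi
              simp only [Finset.mem_Icc] at hi
              have ha : alpha (i - 1) ≤ 1 / 2 := alpha_le_half (by omega : 100 ≤ i - 1)
              have h0f : (0 : ℝ) ≤ ((i - 1).factorial : ℝ) := by positivity
              have h0p : (0 : ℝ) ≤ (2 : ℝ) ^ (n - i) := by positivity
              calc ((i - 1).factorial : ℝ) * alpha (i - 1) * 2 ^ (n - i)
                  ≤ ((i - 1).factorial : ℝ) * (1 / 2) * 2 ^ (n - i) := by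
                    apply mul_le_mul_of_nonneg_right
                      (mul_le_mul_of_nonneg_left ha h0f) h0p
                _ = (1 / 2 : ℝ) * (((i - 1).factorial : ℝ) * 2 ^ (n - i)) := by ring
          _ = (1 / 2 : ℝ) * ∑ i ∈ Finset.Icc 102 n, (((i - 1).factorial : ℝ) * 2 ^ (n - i)) := by
              rw [Finset.mul_sum]
          _ ≤ (1 / 2 : ℝ) * ∑ i ∈ Finset.Icc 4 n, (((i - 1).factorial : ℝ) * 2 ^ (n - i)) := by
              apply mul_le_mul_of_nonneg_left _ (by norm_num)
              apply Finset.sum_le_sum_of_subset_of_nonneg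
              · intro x hx
                simp only [Finset.mem_Icc] at *
                omega
              · intro i _ _
                positivity
          _ ≤ (1 / 2 : ℝ) * (2 * ((n - 1).factorial : ℝ)) := by
              apply mul_le_mul_of_nonneg_left (sum_fact_pow_le n (by omega)) (by norm_num)
          _ = ((n - 1).factorial : ℝ) := by ring
      have hsmall : (3 : ℝ) * 2 ^ (n - 2) ≤ 3 * (Nat.factorial 100 : ℝ) * 2 ^ n := by
        have h1 : (2 : ℝ) ^ (n - 2) ≤ 2 ^ n := by
          apply pow_le_pow_right₀ (by norm_num) (by omega)
        have h2 : (1 : ℝ) ≤ (Nat.factorial 100 : ℝ) := by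
          exact_mod_cast Nat.one_le_iff_ne_zero.mpr (Nat.factorial_pos 100).ne'
        have h3 : (1 : ℝ) * 2 ^ n ≤ (Nat.factorial 100 : ℝ) * 2 ^ n :=
          mul_le_mul_of_nonneg_right h2 (by positivity)
        linarith
      have hKK : (9803 : ℝ) * (Nat.factorial 100 : ℝ) * 2 ^ n ≤ ((n - 1).factorial : ℝ) := by
        have := pow_mul_fact_le n hn
        have hc : ((2 ^ n * (9803 * Nat.factorial 100) : ℕ) : ℝ) ≤ ((Nat.factorial (n - 1) : ℕ) : ℝ) := by
          exact_mod_cast this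
        push_cast at hc
        linarith
      linarith
    unfold p
    have hd2 : (0 : ℝ) < (n : ℝ) - 2 := by linarith
    have hd4 : (0 : ℝ) < (n : ℝ) - 4 := by linarith
    have hdpos : (0 : ℝ) < (n : ℝ) * ((n : ℝ) - 2) * ((n : ℝ) - 4) :=
      mul_pos (mul_pos hnpos hd2) hd4
    have hrhs : 2 / (n : ℝ) ≤ 2 * ((n : ℝ) ^ 2 - 4 * n + 46) / ((n : ℝ) * ((n : ℝ) - 2) * ((n : ℝ) - 4)) := by
      rw [div_le_div_iff₀ hnpos hdpos]
      nlinarith [mul_nonneg hnpos.le (show (0 : ℝ) ≤ 2 * (n : ℝ) + 38 by linarith)]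
    have hp2 : (∑ i ∈ Finset.Icc 4 n, ((i - 1).factorial : ℝ) * alpha (i - 1) * 2 ^ (n - i)
        + 3 * 2 ^ (n - 2)) / (n.factorial : ℝ) ≤ 2 / (n : ℝ) := by
      rw [div_le_div_iff₀ hfac hnpos]
      calc (∑ i ∈ Finset.Icc 4 n, ((i - 1).factorial : ℝ) * alpha (i - 1) * 2 ^ (n - i)
          + 3 * 2 ^ (n - 2)) * (n : ℝ) ≤ 2 * ((n - 1).factorial : ℝ) * (n : ℝ) := by
            apply mul_le_mul_of_nonneg_right hnum (by positivity)
        _ = 2 * (n.factorial : ℝ) := by rw [hfe]; ring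
    linarith
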